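/- Let H be a finite simple connected graph with hop-diameter at most D, let ℓ ≥ 1 be an integer, and let Q be a set of at most ℓ edges of H. Then every connected component of H∖Q has hop-diameter at most (4ℓ+2)·D. -/

import Mathlib

open SimpleGraph

/-- Between any two `getVert` positions of a walk there is a walk of length at most the
difference of positions. -/
private lemma exists_walk_getVert' {V : Type*} {G : SimpleGraph V} :
    ∀ {u v : V} (p : G.Walk u v) (a b : ℕ), a ≤ b →
      ∃ w : G.Walk (p.getVert a) (p.getVert b), w.length ≤ b - a := by
  intro u v p
  induction p with
  | nil =>
    intro a b _
    exact ⟨Walk.nil, by simp⟩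
  | @cons x y z h p ih =>
    intro a b hab
    match a, b with
    | 0, 0 => exact ⟨Walk.nil, by simp⟩
    | 0, (c+1) =>
      obtain ⟨w, hw⟩ := ih 0 c (Nat.zero_le c)
      refine ⟨Walk.cons h (w.copy p.getVert_zero rfl), ?_⟩
      change (w.copy p.getVert_zero rfl).length + 1 ≤ c + 1 - 0
      rw [Walk.length_copy]; omega
    | (a+1), (b+1) =>
      obtain ⟨w, hw⟩ := ih a b (by omega)
      exact ⟨w, by simpa using hw⟩

/-- Subwalks of a shortest walk realize the distance lower bound. -/
private lemma dist_getVert_ge {V : Type*} {G : SimpleGraph V} {u v : V}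
    (p : G.Walk u v) (hp : p.length = G.dist u v) {a b : ℕ} (hab : a ≤ b)
    (hb : b ≤ p.length) : b - a ≤ G.dist (p.getVert a) (p.getVert b) := by
  obtain ⟨w1, hw1⟩ := exists_walk_getVert' p 0 a (Nat.zero_le a)
  obtain ⟨w3, hw3⟩ := exists_walk_getVert' p b p.length hb
  obtain ⟨w2, hw2⟩ := exists_walk_getVert' p a b hab
  -- a walk realizing the distance between the two middle vertices
  obtain ⟨w2', hw2'⟩ := (w2.reachable).exists_walk_length_eq_dist
  have hle : G.dist u v ≤ w1.length + (w2'.length + w3.length) := by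
    have := SimpleGraph.dist_le
      (((w1.copy p.getVert_zero rfl).append w2').append (w3.copy rfl p.getVert_length))
    simpa [Walk.length_append, add_assoc] using this
  rw [← hp] at hle
  rw [hw2'] at *
  omega

/-- Either a walk avoiding `Q` survives edge deletion, or it comes close (in the deleted
graph) to an endpoint of a deleted edge. -/
private lemma reroute {V : Type*} [DecidableEq V] {H : SimpleGraph V}
    {Q : Finset (Sym2 V)} :
    ∀ {x y : V} (w : H.Walk x y),
      (∃ q : (H.deleteEdges (↑Q : Set (Sym2 V))).Walk x y, q.length ≤ w.length) ∨
      (∃ z : V, (∃ e ∈ Q, z ∈ e) ∧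
        ∃ q : (H.deleteEdges (↑Q : Set (Sym2 V))).Walk x z, q.length + 1 ≤ w.length) := by
  intro x y w
  induction w with
  | nil => exact Or.inl ⟨Walk.nil, le_rfl⟩
  | @cons x x' y h w ih =>
    by_cases hq : s(x, x') ∈ Q
    · exact Or.inr ⟨x, ⟨s(x, x'), hq, by simp⟩, Walk.nil, by simp⟩
    · have hadj : (H.deleteEdges (↑Q : Set (Sym2 V))).Adj x x' := by
        rw [SimpleGraph.deleteEdges_adj]
        exact ⟨h, by simpa using hq⟩
      rcases ih with ⟨q, hlen⟩ | ⟨z, hz, q, hlen⟩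
      · exact Or.inl ⟨Walk.cons hadj q, by simpa using hlen⟩
      · exact Or.inr ⟨z, hz, Walk.cons hadj q, by simp; omega⟩

/-- Let `H` be a finite connected graph with hop-diameter at most `D`,
let `ℓ ≥ 1`, and let `Q` be a set of at most `ℓ` edges of `H`.  Then every connected
component of `H \ Q` has hop-diameter at most `(4ℓ + 2) · D`: any two vertices that are
reachable from each other in `H \ Q` are at distance at most `(4ℓ + 2) · D` there. -/
theorem component_diameter_after_edge_deletion
    {V : Type*} [Fintype V] [DecidableEq V] (H : SimpleGraph V)
    (hconn : H.Connected) (D : ℕ) (hdiam : ∀ u v : V, H.dist u v ≤ D)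
    (ℓ : ℕ) (hℓ : 1 ≤ ℓ)
    (Q : Finset (Sym2 V)) (hQE : (↑Q : Set (Sym2 V)) ⊆ H.edgeSet) (hQcard : Q.card ≤ ℓ) :
    ∀ u v : V, (H.deleteEdges (↑Q : Set (Sym2 V))).Reachable u v →
      (H.deleteEdges (↑Q : Set (Sym2 V))).dist u v ≤ (4 * ℓ + 2) * D := by
  classical
  intro u v hreach
  set H' := H.deleteEdges (↑Q : Set (Sym2 V)) with hH'
  -- trivial case D = 0
  rcases Nat.eq_zero_or_pos D with hD0 | hD
  · have : u = v := by
      have h0 : H.dist u v = 0 := le_antisymm (hD0 ▸ hdiam u v) (Nat.zero_le _)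
      exact (hconn.dist_eq_zero_iff).mp h0
    subst this
    have h0 : H'.dist u u = 0 := SimpleGraph.dist_self
    omega
  -- the set of endpoints of deleted edges
  set S : Finset V := Q.biUnion (fun e => Finset.univ.filter (· ∈ e)) with hS
  have hScard : S.card ≤ 2 * ℓ := by
    calc S.card ≤ ∑ e ∈ Q, (Finset.univ.filter (· ∈ e)).card := Finset.card_biUnion_le
    _ ≤ ∑ _e ∈ Q, 2 := by
        refine Finset.sum_le_sum fun e _ => ?_
        induction e with
        | h a b =>
          have : (Finset.univ.filter (· ∈ s(a, b))) ⊆ {a, b} := by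
            intro z hz
            simp only [Finset.mem_filter, Sym2.mem_iff] at hz
            simpa using hz.2
          calc (Finset.univ.filter (· ∈ s(a, b))).card ≤ ({a, b} : Finset V).card :=
                Finset.card_le_card this
          _ ≤ 2 := Finset.card_insert_le _ _ |>.trans (by simp)
    _ = 2 * Q.card := by rw [Finset.sum_const, smul_eq_mul, mul_comm]
    _ ≤ 2 * ℓ := by omega
  -- spacing
  set s : ℕ := max (D + 1) (2 * D - 1) with hs
  have hspos : 0 < s := by omega
  obtain ⟨p, hp⟩ := hreach.exists_walk_length_eq_dist
  set L : ℕ := H'.dist u v with hL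
  set t : ℕ := L / s with ht
  set m : ℕ → V := fun i => p.getVert (i * s) with hm
  -- each gap forces closeness to an endpoint of a deleted edge
  have key : ∀ i < t, ∃ z ∈ S, ∃ q : H'.Walk (m i) z, q.length + 1 ≤ D := by
    intro i hi
    have hib : (i + 1) * s ≤ L := by
      have : (i + 1) * s ≤ t * s := Nat.mul_le_mul_right s (by omega)
      calc (i+1) * s ≤ t * s := this
      _ ≤ L := by rw [ht]; exact Nat.div_mul_le_self L s
    have hlow : s ≤ H'.dist (m i) (m (i + 1)) := by
      have := dist_getVert_ge p (by omega) (a := i * s) (b := (i + 1) * s)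
        (Nat.mul_le_mul_right s (by omega)) (by omega)
      have heq : (i + 1) * s - i * s = s := by ring_nf; omega
      rw [heq] at this
      exact this
    -- an H-walk of length ≤ D between them
    obtain ⟨w, hw⟩ := (hconn (m i) (m (i + 1))).exists_walk_length_eq_dist
    have hwD : w.length ≤ D := hw ▸ hdiam _ _
    rcases reroute (Q := Q) w with ⟨q, hq⟩ | ⟨z, hz, q, hq⟩
    · exfalso
      have : H'.dist (m i) (m (i + 1)) ≤ D := le_trans (SimpleGraph.dist_le q) (by omega)
      omega
    · refine ⟨z, ?_, q, by omega⟩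
      obtain ⟨e, he, hze⟩ := hz
      rw [hS]
      exact Finset.mem_biUnion.mpr ⟨e, he, by simpa using hze⟩
  choose z hzS q hq using key
  -- injectivity
  have hinj : ∀ i, (hi : i < t) → ∀ j, (hj : j < t) → z i hi = z j hj → i = j := by
    intro i hi j hj hzeq
    by_contra hne
    wlog hij : i < j generalizing i j
    · exact this j hj i hi hzeq.symm (Ne.symm hne) (by omega)
    have hjb : j * s ≤ L := by
      calc j * s ≤ t * s := Nat.mul_le_mul_right s (by omega)
      _ ≤ L := by rw [ht]; exact Nat.div_mul_le_self L s
    have hlow : s ≤ H'.dist (m i) (m j) := by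
      have := dist_getVert_ge p (by omega) (a := i * s) (b := j * s)
        (Nat.mul_le_mul_right s (by omega)) (by omega)
      have : j * s - i * s ≤ H'.dist (m i) (m j) := this
      have hsle : s ≤ j * s - i * s := by
        have : (i + 1) * s ≤ j * s := Nat.mul_le_mul_right s (by omega)
        have hii : i * s + s ≤ j * s := by nlinarith
        omega
      omega
    have hup : H'.dist (m i) (m j) ≤ 2 * D - 2 := by
      have := SimpleGraph.dist_le ((q i hi).append
        ((q j hj).copy rfl (by rw [hzeq])).reverse)
      have h1 := hq i hi
      have h2 := hq j hj
      simp only [Walk.length_append, Walk.length_reverse, Walk.length_copy] at this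
      omega
    omega
  -- count: t ≤ |S| ≤ 2ℓ
  have hts : t ≤ 2 * ℓ := by
    have : t ≤ S.card := by
      classical
      have := Finset.card_le_card_of_injOn
        (f := fun i => if h : i < t then z i h else u)
        (s := Finset.range t) (t := S)
        (fun i hi => by
          simp only [Finset.mem_range, Finset.coe_range, Set.mem_Iio] at hi
          simp [hi, hzS i hi])
        (fun i hi j hj hij => by
          simp only [Finset.coe_range, Set.mem_Iio] at hi hj
          simp only [dif_pos hi, dif_pos hj] at hij
          exact hinj i hi j hj hij)
      simpa using this
    omega
  -- final arithmetic
  have hmod : L = s * t + L % s := by rw [ht]; exact (Nat.div_add_mod L s).symm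
  have hrem : L % s < s := Nat.mod_lt _ hspos
  have hsD : s ≤ 2 * D := by omega
  have : L ≤ 2 * D * (2 * ℓ) + 2 * D - 1 := by
    have h1 : s * t ≤ 2 * D * (2 * ℓ) :=
      Nat.mul_le_mul hsD hts
    omega
  have he1 : 2 * D * (2 * ℓ) = 4 * ℓ * D := by ring
  have he2 : (4 * ℓ + 2) * D = 4 * ℓ * D + 2 * D := by ring
  omega
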